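/- The cocycle identity for Q̃: for γ₁, γ₂ in a splitting crystal group Γ, Q̃_{[s,t]}(γ₁γ₂) = Σ_{u=t}^{s} Q̃_{[s,u]}(γ₂) Q̃_{[u,t]}(γ₁). -/

import Mathlib

open scoped BigOperators
open Finset MeasureTheory

noncomputable section

/-- The vector `X_[s](x)` of all degree-`s` monomials of `x ∈ ℂ^d`, indexed by
multisets of size `s` over `Fin d` (i.e. `Sym (Fin d) s`). -/
def Xvec (d s : ℕ) (x : Fin d → ℂ) : Sym (Fin d) s → ℂ :=
  fun m => (Multiset.map x (m : Multiset (Fin d))).prod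

/-- `X_[s]` applied to a real vector. -/
def XvecR (d s : ℕ) (x : Fin d → ℝ) : Sym (Fin d) s → ℂ :=
  Xvec d s fun i => (x i : ℂ)

/-- `Mt` is the matrix `M_[t]` induced by `M` on degree-`t` monomials, i.e.
`X_[t](Mx) = M_[t] X_[t](x)` for all `x`. -/
def IsMonMat (d t : ℕ) (M : Matrix (Fin d) (Fin d) ℝ)
    (Mt : Matrix (Sym (Fin d) t) (Sym (Fin d) t) ℂ) : Prop :=
  ∀ x : Fin d → ℝ, XvecR d t (M.mulVec x) = Mt.mulVec (XvecR d t x)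

/-- `Q` is the family of matrices `Q_[s,t](y)` defined by the expansion
`X_[s](x - y) = ∑_{t=0}^{s} Q_[s,t](y) X_[t](x)`. -/
def IsQfam (d : ℕ)
    (Q : (s : ℕ) → (t : ℕ) → (Fin d → ℝ) → Matrix (Sym (Fin d) s) (Sym (Fin d) t) ℂ) : Prop :=
  ∀ (s : ℕ) (y x : Fin d → ℝ),
    XvecR d s (x - y) = ∑ t ∈ Finset.range (s + 1), (Q s t y).mulVec (XvecR d t x)

/-- A complex square matrix is expansive if all of its eigenvalues (roots of the
characteristic polynomial) have modulus strictly greater than `1`. -/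
def ExpansiveC {n : Type*} [Fintype n] [DecidableEq n] (M : Matrix n n ℂ) : Prop :=
  ∀ μ : ℂ, M.charpoly.IsRoot μ → 1 < ‖μ‖

/-- A real square matrix is expansive if all of its complex eigenvalues have
modulus strictly greater than `1`. -/
def ExpansiveR {n : Type*} [Fintype n] [DecidableEq n] (M : Matrix n n ℝ) : Prop :=
  ExpansiveC (M.map (algebraMap ℝ ℂ))

/-- Elements of a splitting crystal group `Γ = G ⋉ Λ`, written as pairs
`γ = (b, l)` with `b` a matrix (the point part) and `l` a vector. -/
abbrev CrystElem (d : ℕ) := Matrix (Fin d) (Fin d) ℝ × (Fin d → ℝ)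

/-- The action `γ(x) = b(x + l)` of `γ = (b, l)`. -/
def crystAct {d : ℕ} (γ : CrystElem d) (x : Fin d → ℝ) : Fin d → ℝ :=
  γ.1.mulVec (x + γ.2)

/-- The product `(b₂,l₂)·(b₁,l₁) = (b₂b₁, l₁ + b₁⁻¹ l₂)` (composition of the actions). -/
def crystMul {d : ℕ} (γ₂ γ₁ : CrystElem d) : CrystElem d :=
  (γ₂.1 * γ₁.1, γ₁.2 + (γ₁.1)⁻¹.mulVec γ₂.2)

/-- The inverse `(b,l)⁻¹ = (b⁻¹, -b l)`. -/
def crystInv {d : ℕ} (γ : CrystElem d) : CrystElem d :=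
  ((γ.1)⁻¹, -(γ.1.mulVec γ.2))

/-- Conjugation by an invertible matrix `A`:
`A (b,l) A⁻¹ = (A b A⁻¹, (A b A⁻¹)⁻¹ (A b l))`. -/
def crystConj {d : ℕ} (A : Matrix (Fin d) (Fin d) ℝ) (γ : CrystElem d) : CrystElem d :=
  (A * γ.1 * A⁻¹, (A * γ.1 * A⁻¹)⁻¹.mulVec ((A * γ.1).mulVec γ.2))

/-- `(G, Λ)` are the data of a splitting crystal group `Γ = G ⋉ Λ`: `G` is a
finite group of orthogonal matrices and `Λ` is a full-rank lattice preserved by `G`. -/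
def IsSplittingCrystal (d : ℕ) (G : Finset (Matrix (Fin d) (Fin d) ℝ))
    (Λ : Set (Fin d → ℝ)) : Prop :=
  (1 : Matrix (Fin d) (Fin d) ℝ) ∈ G ∧
  (∀ b ∈ G, ∀ b' ∈ G, b * b' ∈ G) ∧
  (∀ b ∈ G, b⁻¹ ∈ G) ∧
  (∀ b ∈ G, b * b.transpose = 1) ∧
  (∃ R : Matrix (Fin d) (Fin d) ℝ, IsUnit R.det ∧
      Λ = {v | ∃ k : Fin d → ℤ, v = R.mulVec fun i => (k i : ℝ)}) ∧
  (∀ b ∈ G, ∀ l ∈ Λ, b.mulVec l ∈ Λ)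

/-- The underlying set of `Γ = G ⋉ Λ`. -/
def crystSet {d : ℕ} (G : Finset (Matrix (Fin d) (Fin d) ℝ)) (Λ : Set (Fin d → ℝ)) :
    Set (CrystElem d) := {γ | γ.1 ∈ G ∧ γ.2 ∈ Λ}

/-- `A` is a `Γ`-admissible matrix: expansive and `AΓA⁻¹ ⊆ Γ`. -/
def IsAdmissible {d : ℕ} (G : Finset (Matrix (Fin d) (Fin d) ℝ)) (Λ : Set (Fin d → ℝ))
    (A : Matrix (Fin d) (Fin d) ℝ) : Prop :=
  ExpansiveR A ∧ ∀ γ ∈ crystSet G Λ, crystConj A γ ∈ crystSet G Λ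


section Helpers

lemma XvecR_eq (d t : ℕ) (x : Fin d → ℝ) (m : Sym (Fin d) t) :
    XvecR d t x m =
      ((MvPolynomial.eval x (MvPolynomial.monomial (Multiset.toFinsupp (m : Multiset (Fin d))) (1:ℝ)) : ℝ) : ℂ) := by
  rw [MvPolynomial.eval_monomial, one_mul]
  rw [Finsupp.prod]
  rw [Multiset.toFinsupp_support]
  simp only [Multiset.toFinsupp_apply]
  rw [← Finset.prod_multiset_map_count]
  unfold XvecR Xvec
  rw [show ((fun i => ((x i : ℝ) : ℂ))) = (fun r : ℝ => (r:ℂ)) ∘ x from rfl,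
    ← Multiset.map_map (fun r : ℝ => (r:ℂ)) x, ← Complex.ofRealHom_eq_coe,
    map_multiset_prod Complex.ofRealHom]
  rfl

lemma poly_coeffs_zero {d : ℕ} {I : Type*} [Fintype I] (e : I → (Fin d →₀ ℕ))
    (he : Function.Injective e) (c : I → ℂ)
    (h : ∀ x : Fin d → ℝ, ∑ i, c i *
      ((MvPolynomial.eval x (MvPolynomial.monomial (e i) (1:ℝ)) : ℝ) : ℂ) = 0) :
    ∀ i, c i = 0 := by
  have key : ∀ g : ℂ → ℝ, g 0 = 0 → (∀ (z : ℂ) (r : ℝ), g (z * (r:ℂ)) = g z * r) →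
      (∀ F : I → ℂ, g (∑ i, F i) = ∑ i, g (F i)) →
      ∀ i, g (c i) = 0 := by
    intro g g0 gmul gsum i
    set P : MvPolynomial (Fin d) ℝ :=
      ∑ j, MvPolynomial.monomial (e j) (g (c j)) with hP
    have hPeval : ∀ x : Fin d → ℝ, MvPolynomial.eval x P = 0 := by
      intro x
      have hx := h x
      have h2 := congrArg g hx
      rw [gsum, g0] at h2
      rw [hP, map_sum, ← h2]
      apply Finset.sum_congr rfl
      intro j _
      rw [gmul, MvPolynomial.eval_monomial, MvPolynomial.eval_monomial, one_mul]
    have hP0 : P = 0 := MvPolynomial.funext (by simpa using hPeval)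
    have h3 := congrArg (MvPolynomial.coeff (e i)) hP0
    rw [hP, MvPolynomial.coeff_zero, MvPolynomial.coeff_sum] at h3
    rw [Finset.sum_eq_single i (fun j _ hj => by
      rw [MvPolynomial.coeff_monomial, if_neg (fun hee => hj (he hee))])
      (fun hi => absurd (Finset.mem_univ i) hi)] at h3
    rwa [MvPolynomial.coeff_monomial, if_pos rfl] at h3
  intro i
  have hre := key Complex.re rfl (fun z r => by simp [Complex.mul_re])
    (fun F => Complex.re_sum _ F) i
  have him := key Complex.im rfl (fun z r => by simp [Complex.mul_im])
    (fun F => Complex.im_sum _ F) i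
  exact Complex.ext hre him

lemma matfam_zero (d s : ℕ) {n : Type*} [Fintype n]
    (M : (t : ℕ) → Matrix n (Sym (Fin d) t) ℂ)
    (h : ∀ x : Fin d → ℝ, ∑ t ∈ Finset.range (s+1), (M t).mulVec (XvecR d t x) = 0) :
    ∀ t ≤ s, M t = 0 := by
  have main : ∀ j : n, ∀ t : Fin (s+1), ∀ m : Sym (Fin d) t.val, M t.val j m = 0 := by
    intro j
    set I := (t : Fin (s+1)) × Sym (Fin d) t.val with hI
    set e : I → (Fin d →₀ ℕ) := fun i => Multiset.toFinsupp (i.2 : Multiset (Fin d)) with he'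
    have he : Function.Injective e := by
      rintro ⟨t₁, m₁⟩ ⟨t₂, m₂⟩ hee
      have hm : (m₁ : Multiset (Fin d)) = (m₂ : Multiset (Fin d)) :=
        Multiset.toFinsupp.injective hee
      have hcard := congrArg Multiset.card hm
      rw [Sym.card_coe, Sym.card_coe] at hcard
      have ht : t₁ = t₂ := Fin.ext hcard
      subst ht
      exact congrArg (Sigma.mk t₁) (Sym.coe_injective hm)
    have hc := poly_coeffs_zero e he (fun i => M i.1.val j i.2) ?_
    · intro t m; exact hc ⟨t, m⟩
    · intro x
      have hx := congrFun (h x) j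
      rw [Finset.sum_apply] at hx
      have : ∑ i : I, (fun i : I => M i.1.val j i.2 *
          ((MvPolynomial.eval x (MvPolynomial.monomial (e i) (1:ℝ)) : ℝ) : ℂ)) i
          = ∑ t : Fin (s+1), ∑ m : Sym (Fin d) t.val, M t.val j m *
          ((MvPolynomial.eval x (MvPolynomial.monomial
            (Multiset.toFinsupp (m : Multiset (Fin d))) (1:ℝ)) : ℝ) : ℂ) := by
        rw [← Finset.univ_sigma_univ, Finset.sum_sigma]
      rw [this]
      rw [Fin.sum_univ_eq_sum_range
        (fun t => ∑ m : Sym (Fin d) t, M t j m *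
          ((MvPolynomial.eval x (MvPolynomial.monomial
            (Multiset.toFinsupp (m : Multiset (Fin d))) (1:ℝ)) : ℝ) : ℂ))]
      rw [Pi.zero_apply] at hx
      rw [← hx]
      apply Finset.sum_congr rfl
      intro t _
      rw [show ((M t).mulVec (XvecR d t x)) j = ∑ m, M t j m * XvecR d t x m from rfl]
      apply Finset.sum_congr rfl
      intro m _
      rw [XvecR_eq]
  intro t ht
  ext j m
  exact main j ⟨t, Nat.lt_succ_of_le ht⟩ m

lemma mat_unique {d t : ℕ} {n : Type*} [Fintype n]
    (M N : Matrix n (Sym (Fin d) t) ℂ)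
    (h : ∀ x : Fin d → ℝ, M.mulVec (XvecR d t x) = N.mulVec (XvecR d t x)) : M = N := by
  ext j m
  have he : Function.Injective
      (fun m : Sym (Fin d) t => Multiset.toFinsupp (m : Multiset (Fin d))) :=
    fun a b hab => Sym.coe_injective (Multiset.toFinsupp.injective hab)
  have hz := poly_coeffs_zero _ he (fun m => M j m - N j m) ?_ m
  · exact sub_eq_zero.mp hz
  · intro x
    have hx := congrFun (h x) j
    simp only [← XvecR_eq, sub_mul, Finset.sum_sub_distrib]
    rw [show (∑ m, M j m * XvecR d t x m) = M.mulVec (XvecR d t x) j from rfl,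
        show (∑ m, N j m * XvecR d t x m) = N.mulVec (XvecR d t x) j from rfl, hx, sub_self]

lemma isMonMat_mul {d u : ℕ} {M N : Matrix (Fin d) (Fin d) ℝ}
    {Mm Nm : Matrix (Sym (Fin d) u) (Sym (Fin d) u) ℂ}
    (hM : IsMonMat d u M Mm) (hN : IsMonMat d u N Nm) :
    IsMonMat d u (M * N) (Mm * Nm) := by
  intro x
  rw [← Matrix.mulVec_mulVec, hM, hN, Matrix.mulVec_mulVec]

lemma isMonMat_one {d u : ℕ} : IsMonMat d u 1 1 := by
  intro x
  rw [Matrix.one_mulVec, Matrix.one_mulVec]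

lemma monMat_unique {d u : ℕ} {M : Matrix (Fin d) (Fin d) ℝ}
    {A B : Matrix (Sym (Fin d) u) (Sym (Fin d) u) ℂ}
    (hA : IsMonMat d u M A) (hB : IsMonMat d u M B) : A = B :=
  mat_unique A B (fun x => by rw [← hA, hB])

lemma monMat_det_unit {d u : ℕ} {b : Matrix (Fin d) (Fin d) ℝ}
    {bm : Matrix (Sym (Fin d) u) (Sym (Fin d) u) ℂ}
    (hbm : IsMonMat d u b bm) {n : ℕ} (hn : 0 < n) (hb : b ^ n = 1) :
    IsUnit bm.det := by
  have hpow : ∀ k, IsMonMat d u (b ^ k) (bm ^ k) := by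
    intro k
    induction k with
    | zero => simpa [pow_zero] using (isMonMat_one (d := d) (u := u))
    | succ k ih => rw [pow_succ, pow_succ]; exact isMonMat_mul ih hbm
  have h1 : bm ^ n = 1 := by
    have := hpow n
    rw [hb] at this
    exact monMat_unique this (isMonMat_one (d := d) (u := u))
  obtain ⟨k, rfl⟩ := Nat.exists_eq_succ_of_ne_zero hn.ne'
  rw [pow_succ'] at h1
  exact Matrix.isUnit_det_of_right_inverse h1

lemma sum_mulVec' {n m ι : Type*} [Fintype m] (f : Finset ι)
    (A : ι → Matrix n m ℂ) (v : m → ℂ) :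
    (∑ i ∈ f, A i).mulVec v = ∑ i ∈ f, (A i).mulVec v := by
  ext j
  simp only [Matrix.mulVec, dotProduct, Finset.sum_apply, Matrix.sum_apply,
    Finset.sum_mul]
  rw [Finset.sum_comm]

lemma mulVec_sum' {n m ι : Type*} [Fintype m] (f : Finset ι)
    (A : Matrix n m ℂ) (v : ι → m → ℂ) :
    A.mulVec (∑ i ∈ f, v i) = ∑ i ∈ f, A.mulVec (v i) :=
  map_sum A.mulVecLin v f

/-- Key expansion: `X_[s](b⁻¹x − l) = ∑_t (Q_[s,t](l) (b_[t])⁻¹) X_[t](x)`. -/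
lemma Qtilde_expand {d : ℕ} (s : ℕ)
    (Q : (s : ℕ) → (t : ℕ) → (Fin d → ℝ) → Matrix (Sym (Fin d) s) (Sym (Fin d) t) ℂ)
    (hQ : IsQfam d Q)
    (b : Matrix (Fin d) (Fin d) ℝ) (hbdet : IsUnit b.det) (l : Fin d → ℝ)
    (bm : (u : ℕ) → Matrix (Sym (Fin d) u) (Sym (Fin d) u) ℂ)
    (hbm : ∀ u, IsMonMat d u b (bm u)) (hbmdet : ∀ u, IsUnit (bm u).det)
    (x : Fin d → ℝ) :
    XvecR d s (b⁻¹.mulVec x - l) =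
      ∑ t ∈ Finset.range (s+1), (Q s t l * (bm t)⁻¹).mulVec (XvecR d t x) := by
  rw [hQ s l (b⁻¹.mulVec x)]
  apply Finset.sum_congr rfl
  intro t _
  have h1 : XvecR d t x = (bm t).mulVec (XvecR d t (b⁻¹.mulVec x)) := by
    rw [← hbm t (b⁻¹.mulVec x), Matrix.mulVec_mulVec, Matrix.mul_nonsing_inv b hbdet,
      Matrix.one_mulVec]
  have h2 : XvecR d t (b⁻¹.mulVec x) = (bm t)⁻¹.mulVec (XvecR d t x) := by
    rw [h1, Matrix.mulVec_mulVec, Matrix.nonsing_inv_mul (bm t) (hbmdet t),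
      Matrix.one_mulVec]
  rw [h2, Matrix.mulVec_mulVec]

end Helpers

/-- The cocycle identity for `Q̃`: for `γ₁ = (b₁,l₁)`, `γ₂ = (b₂,l₂)` in a splitting
crystal group `Γ = G ⋉ Λ`,
`Q̃_[s,t](γ₁γ₂) = ∑_{u=t}^{s} Q̃_[s,u](γ₂) Q̃_[u,t](γ₁)`,
where `Q̃_[s,t]((b,l)) = Q_[s,t](l) b_[t]⁻¹` and `γ₁γ₂ = (b₁b₂, l₂ + b₂⁻¹l₁)`. -/
theorem Qtilde_cocycle (d s t : ℕ) (ht : t ≤ s)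
    (G : Finset (Matrix (Fin d) (Fin d) ℝ)) (Λ : Set (Fin d → ℝ))
    (hcr : IsSplittingCrystal d G Λ)
    (Q : (s : ℕ) → (t : ℕ) → (Fin d → ℝ) → Matrix (Sym (Fin d) s) (Sym (Fin d) t) ℂ)
    (hQ : IsQfam d Q)
    (b₁ b₂ : Matrix (Fin d) (Fin d) ℝ) (l₁ l₂ : Fin d → ℝ)
    (hγ₁ : ((b₁, l₁) : CrystElem d) ∈ crystSet G Λ)
    (hγ₂ : ((b₂, l₂) : CrystElem d) ∈ crystSet G Λ)
    (b1m b2m b12m : (u : ℕ) → Matrix (Sym (Fin d) u) (Sym (Fin d) u) ℂ)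
    (hb1 : ∀ u, IsMonMat d u b₁ (b1m u))
    (hb2 : ∀ u, IsMonMat d u b₂ (b2m u))
    (hb12 : ∀ u, IsMonMat d u (b₁ * b₂) (b12m u)) :
    Q s t (crystMul (b₁, l₁) (b₂, l₂)).2 * (b12m t)⁻¹ =
      ∑ u ∈ Finset.Icc t s, (Q s u l₂ * (b2m u)⁻¹) * (Q u t l₁ * (b1m t)⁻¹) := by
  obtain ⟨hb₁G, -⟩ := hγ₁
  obtain ⟨hb₂G, -⟩ := hγ₂
  obtain ⟨h1G, hmulG, hinvG, horth, -, -⟩ := hcr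
  have hdet₁ : IsUnit b₁.det := Matrix.isUnit_det_of_right_inverse (horth b₁ hb₁G)
  have hdet₂ : IsUnit b₂.det := Matrix.isUnit_det_of_right_inverse (horth b₂ hb₂G)
  -- every element of `G` has finite order
  have horder : ∀ b ∈ G, ∃ n, 0 < n ∧ b ^ n = 1 := by
    intro b hbG
    have hpow : ∀ k, b ^ k ∈ G := by
      intro k
      induction k with
      | zero => simpa [pow_zero] using h1G
      | succ k ih => rw [pow_succ]; exact hmulG _ ih _ hbG
    obtain ⟨i, hi, j, hj, hij, hfij⟩ := Finset.exists_ne_map_eq_of_card_lt_of_maps_to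
      (s := Finset.range (G.card + 1)) (t := G) (by simp) (fun k _ => hpow k)
    have hu : IsUnit b := (Matrix.isUnit_iff_isUnit_det b).2
      (Matrix.isUnit_det_of_right_inverse (horth b hbG))
    have key : ∀ i j : ℕ, i < j → b ^ i = b ^ j → ∃ n, 0 < n ∧ b ^ n = 1 := by
      intro i j hlt hbij
      refine ⟨j - i, by omega, (hu.pow i).mul_left_cancel ?_⟩
      rw [← pow_add, Nat.add_sub_cancel' hlt.le, mul_one]
      exact hbij.symm
    rcases lt_or_gt_of_ne hij with hlt | hlt
    · exact key i j hlt hfij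
    · exact key j i hlt hfij.symm
  obtain ⟨n₁, hn₁, hbn₁⟩ := horder b₁ hb₁G
  obtain ⟨n₂, hn₂, hbn₂⟩ := horder b₂ hb₂G
  have hdetm₁ : ∀ u, IsUnit (b1m u).det := fun u => monMat_det_unit (hb1 u) hn₁ hbn₁
  have hdetm₂ : ∀ u, IsUnit (b2m u).det := fun u => monMat_det_unit (hb2 u) hn₂ hbn₂
  have h12 : b12m t = b1m t * b2m t :=
    monMat_unique (hb12 t) (isMonMat_mul (hb1 t) (hb2 t))
  set L : Fin d → ℝ := l₂ + (b₂)⁻¹.mulVec l₁ with hL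
  have hμ : (crystMul (b₁, l₁) (b₂, l₂)).2 = L := rfl
  -- the core identity
  have star : Q s t L * (b2m t)⁻¹ =
      ∑ u ∈ Finset.Icc t s, Q s u l₂ * (b2m u)⁻¹ * Q u t l₁ := by
    have hzero := matfam_zero d s
      (fun t' => Q s t' L * (b2m t')⁻¹ -
        ∑ u ∈ Finset.Icc t' s, Q s u l₂ * (b2m u)⁻¹ * Q u t' l₁) ?_ t ht
    · exact sub_eq_zero.mp hzero
    · intro x
      simp only [Matrix.sub_mulVec]
      rw [Finset.sum_sub_distrib]
      rw [← Qtilde_expand s Q hQ b₂ hdet₂ L b2m hb2 hdetm₂ x]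
      have hswap : ∑ t' ∈ Finset.range (s+1),
          ((∑ u ∈ Finset.Icc t' s, Q s u l₂ * (b2m u)⁻¹ * Q u t' l₁).mulVec (XvecR d t' x))
          = ∑ u ∈ Finset.range (s+1), ∑ t' ∈ Finset.range (u+1),
            (Q s u l₂ * (b2m u)⁻¹ * Q u t' l₁).mulVec (XvecR d t' x) := by
        simp only [sum_mulVec']
        exact Finset.sum_comm' (fun t' u => by
          simp only [Finset.mem_range, Finset.mem_Icc]; omega)
      rw [hswap]
      have hinner : ∀ u, ∑ t' ∈ Finset.range (u+1),
          (Q s u l₂ * (b2m u)⁻¹ * Q u t' l₁).mulVec (XvecR d t' x)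
          = (Q s u l₂ * (b2m u)⁻¹).mulVec (XvecR d u (x - l₁)) := by
        intro u
        rw [hQ u l₁ x, mulVec_sum']
        apply Finset.sum_congr rfl
        intro t' _
        rw [← Matrix.mulVec_mulVec]
      simp only [hinner]
      rw [← Qtilde_expand s Q hQ b₂ hdet₂ l₂ b2m hb2 hdetm₂ (x - l₁)]
      have hvec : (b₂)⁻¹.mulVec x - L = (b₂)⁻¹.mulVec (x - l₁) - l₂ := by
        rw [Matrix.mulVec_sub, hL]
        abel
      rw [hvec, sub_self]
  rw [hμ, h12, Matrix.mul_inv_rev, ← Matrix.mul_assoc, star, Matrix.sum_mul]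
  apply Finset.sum_congr rfl
  intro u _
  rw [Matrix.mul_assoc]
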